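/- Let k be a field and n ≥ 3. For x ∈ k let X(x) be the block-shift (n−1)×(n−1) matrix over k with entries X(x)_{i,j} = x if j ≡ i + 1 (mod n−1) and 0 otherwise, and set E = X(1). Then E is a polyadic identity for the n-ary matrix multiplication, namely E^{n−1} · X(x) = X(x) for all x ∈ k (equivalently E^{n−1} equals the usual identity matrix), yet E itself is not the usual identity matrix: X(1) ≠ 1. -/

import Mathlib

/-- The block-shift `(n−1) × (n−1)` matrix `X(x)` with entries
`X(x)_{i,j} = x` if `j ≡ i + 1 (mod n−1)` and `0` otherwise. -/
def blockShift (n : ℕ) {k : Type*} [CommRing k] (x : k) :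
    Matrix (Fin (n - 1)) (Fin (n - 1)) k :=
  Matrix.of fun i j => if (j : ℕ) = ((i : ℕ) + 1) % (n - 1) then x else 0

/-- over a field, for `n ≥ 3`, `E = X(1)` is a polyadic identity
for the `n`-ary matrix multiplication: `E^{n−1} · X(x) = X(x)` for all `x`
(equivalently `E^{n−1}` is the usual identity matrix), yet `E` itself is not
the usual identity matrix. -/
theorem blockShift_polyadic_identity {k : Type*} [Field k] (n : ℕ)
    (hn : 3 ≤ n) :
    (∀ x : k, (blockShift n (1 : k)) ^ (n - 1) * blockShift n x =
        blockShift n x) ∧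
      (blockShift n (1 : k)) ^ (n - 1) = 1 ∧
      blockShift n (1 : k) ≠ 1 := by
  have h2 : 2 ≤ n - 1 := by omega
  haveI : NeZero (n - 1) := ⟨by omega⟩
  have hE : ∀ (x : k) (i l : Fin (n - 1)),
      blockShift n x i l = if l = i + 1 then x else 0 := by
    intro x i l
    have h1 : ((i + 1 : Fin (n - 1)) : ℕ) = ((i : ℕ) + 1) % (n - 1) := by
      rw [Fin.add_def]
      simp [Fin.val_one', Nat.one_mod_eq_one.mpr (by omega : n - 1 ≠ 1)]
    simp only [blockShift, Matrix.of_apply, Fin.ext_iff, h1]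
  open Fin.NatCast in
  have key : ∀ j : ℕ, (blockShift n (1 : k)) ^ j =
      Matrix.of fun i l : Fin (n - 1) => if l = i + (j : Fin (n - 1)) then 1 else 0 := by
    intro j
    induction j with
    | zero =>
      ext i l
      simp [Matrix.one_apply, eq_comm]
    | succ j ih =>
      rw [pow_succ, ih]
      ext i l
      rw [Matrix.mul_apply]
      simp only [Matrix.of_apply, hE]
      rw [Finset.sum_eq_single (i + (j : Fin (n - 1)))]
      · push_cast
        rw [if_pos rfl, one_mul, add_assoc]
      · intro t _ ht
        rw [if_neg ht, zero_mul]
      · intro h; exact absurd (Finset.mem_univ _) h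
  have hpow : (blockShift n (1 : k)) ^ (n - 1) = 1 := by
    rw [key]
    ext i l
    simp [Matrix.one_apply, eq_comm, Fin.natCast_self]
  refine ⟨fun x => by rw [hpow, one_mul], hpow, ?_⟩
  intro h
  have h00 := congrFun (congrFun h 0) 0
  rw [hE, Matrix.one_apply_eq, if_neg] at h00
  · exact zero_ne_one h00
  · intro hc
    have := congrArg Fin.val hc
    rw [Fin.add_def] at this
    simp [Fin.val_one', Nat.one_mod_eq_one.mpr (by omega : n - 1 ≠ 1)] at this
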